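/- Let V, Q be Hilbert spaces, B : V → Q' a bounded linear operator satisfying the inf-sup condition with constant β_B > 0, and let R : Q' → W' be a bounded linear operator (W a Hilbert space) whose transpose Rᵀ : W → Q satisfies ‖Rᵀw‖_Q ≥ β_R ‖w‖_W for all w ∈ W. Then the composed operator RB : V → W' satisfies the inf-sup condition: for all w ∈ W, sup_{0≠v∈V} ⟨RBv, w⟩ / ‖v‖_V ≥ β_R β_B ‖w‖_W. -/

import Mathlib

/-- If `B : V → Q'` satisfies the inf-sup condition with constant `β_B`
(lower bound on the orthogonal complement of its kernel, together with surjectivity)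
and `R : Q' → W'` has a transpose `Rᵀ : W → Q` (characterized by `⟨Rq', w⟩ = ⟨q', Rᵀw⟩`)
satisfying `‖Rᵀw‖_Q ≥ β_R‖w‖_W`, then the composition `RB : V → W'` satisfies the
inf-sup condition with constant `β_R β_B`:
`sup_{0≠v} ⟨RBv, w⟩/‖v‖ = ‖(RB)ᵀ w‖_{V'} ≥ β_R β_B ‖w‖_W` for all `w ∈ W`. -/
theorem stmt1
    {V Q W : Type*}
    [NormedAddCommGroup V] [InnerProductSpace ℝ V] [CompleteSpace V]
    [NormedAddCommGroup Q] [InnerProductSpace ℝ Q] [CompleteSpace Q]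
    [NormedAddCommGroup W] [InnerProductSpace ℝ W] [CompleteSpace W]
    (B : V →L[ℝ] (Q →L[ℝ] ℝ))
    (R : (Q →L[ℝ] ℝ) →L[ℝ] (W →L[ℝ] ℝ))
    (RT : W →L[ℝ] Q)
    (hdual : ∀ (q' : Q →L[ℝ] ℝ) (w : W), R q' w = q' (RT w))
    (β_B β_R : ℝ) (hβB : 0 < β_B) (hβR : 0 < β_R)
    (hBsurj : Function.Surjective B)
    (hB : ∀ u ∈ (LinearMap.ker (B : V →ₗ[ℝ] (Q →L[ℝ] ℝ)))ᗮ, β_B * ‖u‖ ≤ ‖B u‖)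
    (hRT : ∀ w : W, β_R * ‖w‖ ≤ ‖RT w‖) :
    ∀ w : W, β_R * β_B * ‖w‖ ≤ ‖(R.comp B).flip w‖ := by

  intro w
  set q := RT w with hq
  by_cases hq0 : q = 0
  · have : β_R * ‖w‖ ≤ 0 := by
      have h := hRT w; rw [← hq, hq0, norm_zero] at h; exact h
    have hw : ‖w‖ = 0 := le_antisymm (by nlinarith [norm_nonneg w]) (norm_nonneg w)
    simp [hw]
  · -- get preimage of the dual functional of q
    obtain ⟨u0, hu0⟩ := hBsurj (InnerProductSpace.toDual ℝ Q q)
    haveI : CompleteSpace (LinearMap.ker (B : V →ₗ[ℝ] (Q →L[ℝ] ℝ))) :=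
      (ContinuousLinearMap.isClosed_ker B).completeSpace_coe
    set u := u0 - (Submodule.orthogonalProjectionOnto (LinearMap.ker (B : V →ₗ[ℝ] (Q →L[ℝ] ℝ))) u0 : V) with hu
    have humem : u ∈ (LinearMap.ker (B : V →ₗ[ℝ] (Q →L[ℝ] ℝ)))ᗮ :=
      Submodule.sub_starProjection_mem_orthogonal u0
    have hBu : B u = InnerProductSpace.toDual ℝ Q q := by
      have hk : B ((Submodule.orthogonalProjectionOnto (LinearMap.ker (B : V →ₗ[ℝ] (Q →L[ℝ] ℝ))) u0 : V)) = 0 :=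
        (Submodule.orthogonalProjectionOnto (LinearMap.ker (B : V →ₗ[ℝ] (Q →L[ℝ] ℝ))) u0).2
      rw [hu, map_sub, hk, hu0, sub_zero]
    have hnormBu : ‖B u‖ = ‖q‖ := by
      rw [hBu]; exact (InnerProductSpace.toDual ℝ Q).norm_map q
    have hval : (R.comp B).flip w u = ‖q‖ ^ 2 := by
      have : (R.comp B).flip w u = R (B u) w := rfl
      rw [this, hdual, hBu]
      simp [InnerProductSpace.toDual_apply_apply, ← hq, real_inner_self_eq_norm_sq]
    have hle : |(R.comp B).flip w u| ≤ ‖(R.comp B).flip w‖ * ‖u‖ :=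
      ((R.comp B).flip w).le_opNorm u
    have hu_norm : β_B * ‖u‖ ≤ ‖q‖ := hnormBu ▸ hB u humem
    have hq_pos : 0 < ‖q‖ := norm_pos_iff.mpr hq0
    have key : β_B * ‖q‖ ≤ ‖(R.comp B).flip w‖ := by
      rw [hval] at hle
      rw [abs_of_nonneg (by positivity)] at hle
      nlinarith [norm_nonneg u, ((R.comp B).flip w).opNorm_nonneg]
    have hw : β_R * ‖w‖ ≤ ‖q‖ := hRT w
    calc β_R * β_B * ‖w‖ = β_B * (β_R * ‖w‖) := by ring
      _ ≤ β_B * ‖q‖ := mul_le_mul_of_nonneg_left hw hβB.le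
      _ ≤ _ := key
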